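/- Fix integers 0 < λ < g and a symmetric λ × λ integer matrix M₀, and let M be the g × g block-diagonal matrix with blocks M₀ and 0. Let A ∈ GL(g, ℤ) satisfy A M Aᵀ ≡ M (mod 2), and write A in block form [[A₀, A₀₁],[A₁₀, A₁]] with A₀ of size λ × λ. If det(M₀) is odd, then A₀ M₀ A₀ᵀ ≡ M₀ (mod 2), A₁₀ ≡ 0 (mod 2), and every diagonal entry of A₁₀ M₀ A₁₀ᵀ is divisible by 4. -/
import Mathlib

open Matrix

private lemma sum_restrict' {g l : ℕ} (hlg : l ≤ g) (f : Fin g → ℤ)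
    (hf : ∀ m : Fin g, ¬ ((m : ℕ) < l) → f m = 0) :
    ∑ m : Fin g, f m = ∑ m : Fin l, f (Fin.castLE hlg m) := by
  classical
  have h1 : ∑ x ∈ Finset.univ.map ⟨Fin.castLE hlg, Fin.castLE_injective hlg⟩, f x
      = ∑ m : Fin l, f (Fin.castLE hlg m) := by
    rw [Finset.sum_map]; rfl
  rw [← h1]
  refine (Finset.sum_subset (Finset.subset_univ _) ?_).symm
  intro x _ hx
  refine hf x fun hxl => hx ?_
  simp only [Finset.mem_map, Finset.mem_univ, Function.Embedding.coeFn_mk, true_and]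
  exact ⟨⟨(x : ℕ), hxl⟩, by ext; simp⟩

private lemma odd_cast_two {n : ℤ} (h : Odd n) : ((n : ZMod 2)) = 1 := by
  obtain ⟨k, hk⟩ := h; subst hk; push_cast
  rw [show ((2:ZMod 2)) = 0 by decide]; ring

private lemma block_entry {g l : ℕ} (hlg : l ≤ g) (A : Matrix (Fin g) (Fin g) ℤ)
    (M₀ : Matrix (Fin l) (Fin l) ℤ) {n n' : ℕ} (e : Fin n → Fin g) (e' : Fin n' → Fin g)
    (i : Fin n) (j : Fin n') :
    ((A.submatrix e (Fin.castLE hlg)) * M₀ * (A.submatrix e' (Fin.castLE hlg))ᵀ) i j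
      = ∑ m : Fin l, (∑ k : Fin l, A (e i) (Fin.castLE hlg k) * M₀ k m)
          * A (e' j) (Fin.castLE hlg m) := by
  simp only [Matrix.mul_apply, Matrix.submatrix_apply, Matrix.transpose_apply]

theorem stmt1 (g l : ℕ) (hl : 0 < l) (hlg : l < g)
    (M₀ : Matrix (Fin l) (Fin l) ℤ) (hM₀ : M₀.IsSymm) (hdet : Odd M₀.det)
    (M : Matrix (Fin g) (Fin g) ℤ)
    (hM : ∀ i j : Fin g, M i j =
      if h : (i : ℕ) < l ∧ (j : ℕ) < l then M₀ ⟨i, h.1⟩ ⟨j, h.2⟩ else 0)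
    (A : Matrix (Fin g) (Fin g) ℤ) (hA : IsUnit A.det)
    (hAM : ∀ i j, (A * M * Aᵀ) i j ≡ M i j [ZMOD 2]) :
    (∀ i j : Fin l,
      ((A.submatrix (Fin.castLE hlg.le) (Fin.castLE hlg.le)) * M₀ *
        (A.submatrix (Fin.castLE hlg.le) (Fin.castLE hlg.le))ᵀ) i j ≡ M₀ i j [ZMOD 2]) ∧
    (∀ (i : Fin (g - l)) (j : Fin l),
      A ⟨l + (i : ℕ), by have := i.isLt; omega⟩ (Fin.castLE hlg.le j) ≡ 0 [ZMOD 2]) ∧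
    (∀ i : Fin (g - l),
      (4 : ℤ) ∣
        ((A.submatrix (fun k : Fin (g - l) => (⟨l + (k : ℕ), by have := k.isLt; omega⟩ : Fin g))
              (Fin.castLE hlg.le)) * M₀ *
          (A.submatrix (fun k : Fin (g - l) => (⟨l + (k : ℕ), by have := k.isLt; omega⟩ : Fin g))
              (Fin.castLE hlg.le))ᵀ) i i) := by
  classical
  set e₀ : Fin l → Fin g := Fin.castLE hlg.le with he₀
  have he₀v : ∀ k : Fin l, ((e₀ k : Fin g) : ℕ) = (k : ℕ) := fun k => rfl
  let e₁ : Fin (g - l) → Fin g := fun k => (⟨l + (k : ℕ), by have := k.isLt; omega⟩ : Fin g)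
  -- entries of M
  have hMe : ∀ k m : Fin l, M (e₀ k) (e₀ m) = M₀ k m := by
    intro k m
    rw [hM, dif_pos (show ((e₀ k : Fin g) : ℕ) < l ∧ ((e₀ m : Fin g) : ℕ) < l from
      ⟨by rw [he₀v]; exact k.isLt, by rw [he₀v]; exact m.isLt⟩)]
    rfl
  have hMtop : ∀ (i : Fin g) (m : Fin g), ¬ ((m : ℕ) < l) → M i m = 0 := by
    intro i m hm; rw [hM, dif_neg]; tauto
  have hMleft : ∀ (i : Fin g) (m : Fin g), ¬ ((i : ℕ) < l) → M i m = 0 := by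
    intro i m hm; rw [hM, dif_neg]; tauto
  -- key sum formula
  have key : ∀ i j : Fin g, (A * M * Aᵀ) i j
      = ∑ m : Fin l, (∑ k : Fin l, A i (e₀ k) * M₀ k m) * A j (e₀ m) := by
    intro i j
    have expand : (A * M * Aᵀ) i j
        = ∑ m : Fin g, (∑ k : Fin g, A i k * M k m) * A j m := by
      simp only [Matrix.mul_apply, Matrix.transpose_apply]
    rw [expand]
    rw [sum_restrict' hlg.le _ (fun m hm => by
      rw [Finset.sum_eq_zero (fun k _ => by rw [hMtop k m hm, mul_zero]), zero_mul])]
    refine Finset.sum_congr rfl fun m _ => ?_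
    congr 1
    rw [sum_restrict' hlg.le _ (fun k hk => by rw [hMleft k (e₀ m) hk, mul_zero])]
    refine Finset.sum_congr rfl fun k _ => ?_
    rw [hMe]
  -- cast of hAM
  have hAMc : ∀ i j : Fin g, (((A * M * Aᵀ) i j : ℤ) : ZMod 2) = ((M i j : ℤ) : ZMod 2) :=
    fun i j => (ZMod.intCast_eq_intCast_iff _ _ 2).mpr (by exact_mod_cast hAM i j)
  -- matrices over ZMod 2
  set φ : ℤ →+* ZMod 2 := Int.castRingHom (ZMod 2) with hφ
  set B₀ : Matrix (Fin l) (Fin l) (ZMod 2) := (A.submatrix e₀ e₀).map φ with hB₀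
  set B₁₀ : Matrix (Fin (g - l)) (Fin l) (ZMod 2) := (A.submatrix e₁ e₀).map φ with hB₁₀
  set N₀ : Matrix (Fin l) (Fin l) (ZMod 2) := M₀.map φ with hN₀
  have hBM : B₀ * N₀ * B₀ᵀ = N₀ := by
    ext i j
    have h1 : (B₀ * N₀ * B₀ᵀ) i j
        = φ (((A.submatrix e₀ e₀) * M₀ * (A.submatrix e₀ e₀)ᵀ) i j) := by
      rw [show B₀ * N₀ * B₀ᵀ = ((A.submatrix e₀ e₀) * M₀ * (A.submatrix e₀ e₀)ᵀ).map φ by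
        rw [Matrix.map_mul, Matrix.map_mul, Matrix.transpose_map]]
      rfl
    rw [h1, show ((A.submatrix e₀ e₀) * M₀ * (A.submatrix e₀ e₀)ᵀ) i j
        = (A * M * Aᵀ) (e₀ i) (e₀ j) by rw [block_entry hlg.le, key]]
    have h2 := hAMc (e₀ i) (e₀ j)
    rw [hMe] at h2
    exact h2
  have hB10 : B₁₀ * N₀ * B₀ᵀ = 0 := by
    ext i j
    have h1 : (B₁₀ * N₀ * B₀ᵀ) i j
        = φ (((A.submatrix e₁ e₀) * M₀ * (A.submatrix e₀ e₀)ᵀ) i j) := by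
      rw [show B₁₀ * N₀ * B₀ᵀ = ((A.submatrix e₁ e₀) * M₀ * (A.submatrix e₀ e₀)ᵀ).map φ by
        rw [Matrix.map_mul, Matrix.map_mul, Matrix.transpose_map]]
      rfl
    rw [h1, show ((A.submatrix e₁ e₀) * M₀ * (A.submatrix e₀ e₀)ᵀ) i j
        = (A * M * Aᵀ) (e₁ i) (e₀ j) by rw [block_entry hlg.le, key]]
    have h2 := hAMc (e₁ i) (e₀ j)
    rw [hMleft (e₁ i) (e₀ j) (by simp [e₁])] at h2
    simpa using h2
  -- determinants
  have hdN : N₀.det ≠ 0 := by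
    have hd1 : (M₀.map ⇑φ).det = φ M₀.det := (RingHom.map_det φ M₀).symm
    rw [hN₀, hd1, show φ M₀.det = ((M₀.det : ℤ) : ZMod 2) from rfl, odd_cast_two hdet]
    decide
  have hdetEq : B₀.det * N₀.det * B₀.det = N₀.det := by
    have := congrArg Matrix.det hBM
    rwa [Matrix.det_mul, Matrix.det_mul, Matrix.det_transpose] at this
  have hdB : B₀.det ≠ 0 := by
    intro h0; rw [h0, zero_mul, zero_mul] at hdetEq; exact hdN hdetEq.symm
  have hu : IsUnit (N₀ * B₀ᵀ).det := by
    rw [Matrix.det_mul, Matrix.det_transpose]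
    exact isUnit_iff_ne_zero.mpr (mul_ne_zero hdN hdB)
  have hB10z : B₁₀ = 0 := by
    have h1 : B₁₀ * (N₀ * B₀ᵀ) = 0 := by rw [← Matrix.mul_assoc]; exact hB10
    calc B₁₀ = B₁₀ * ((N₀ * B₀ᵀ) * (N₀ * B₀ᵀ)⁻¹) := by
          rw [Matrix.mul_nonsing_inv _ hu, Matrix.mul_one]
      _ = (B₁₀ * (N₀ * B₀ᵀ)) * (N₀ * B₀ᵀ)⁻¹ := (Matrix.mul_assoc _ _ _).symm
      _ = 0 := by rw [h1, Matrix.zero_mul]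
  -- claim 2 in ℤ
  have claim2 : ∀ (i : Fin (g - l)) (j : Fin l), (2 : ℤ) ∣ A (e₁ i) (e₀ j) := by
    intro i j
    have h1 : ((A (e₁ i) (e₀ j) : ℤ) : ZMod 2) = 0 := by
      have := congrFun (congrFun hB10z i) j
      simpa [hB₁₀] using this
    exact_mod_cast (ZMod.intCast_zmod_eq_zero_iff_dvd _ 2).mp h1
  refine ⟨?_, ?_, ?_⟩
  · -- claim 1
    intro i j
    have h1 : ((((A.submatrix e₀ e₀) * M₀ * (A.submatrix e₀ e₀)ᵀ) i j : ℤ) : ZMod 2)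
        = ((M₀ i j : ℤ) : ZMod 2) := by
      have := congrFun (congrFun hBM i) j
      rw [show B₀ * N₀ * B₀ᵀ = ((A.submatrix e₀ e₀) * M₀ * (A.submatrix e₀ e₀)ᵀ).map φ by
        rw [Matrix.map_mul, Matrix.map_mul, Matrix.transpose_map]] at this
      exact this
    exact_mod_cast (ZMod.intCast_eq_intCast_iff _ _ 2).mp h1
  · -- claim 2
    intro i j
    have := claim2 i j
    exact_mod_cast (Int.modEq_zero_iff_dvd).mpr this
  · -- claim 3
    intro i
    rw [block_entry hlg.le A M₀ e₁ e₁ i i]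
    refine Finset.dvd_sum fun m _ => ?_
    have h1 : (2 : ℤ) ∣ ∑ k : Fin l, A (e₁ i) (Fin.castLE hlg.le k) * M₀ k m :=
      Finset.dvd_sum fun k _ => (claim2 i k).mul_right _
    calc (4 : ℤ) = 2 * 2 := by norm_num
      _ ∣ _ := mul_dvd_mul h1 (claim2 i m)
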